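/- (Gap reduction with exponential bound) Let p, p', v be three distinct points in ℝ^m with d(p, v) ≤ d(p', v), let p'' be the point on the segment from p' to v closest to p, and assume p'' ≠ v. Set δ = d(p, p'), δ' = d(p, p''), r = d(p, v), and let R be any real with R ≥ r. If δ ≤ r, then δ' ≤ δ·√(1 − δ²/(4R²)) < δ·exp(−δ²/(8R²)). -/

import Mathlib

set_option maxHeartbeats 1000000


/-- **Gap reduction with exponential bound**. In the setting of the gap-reduction theorem,
with `R ≥ r = d(p,v)`: if `δ ≤ r`, then
`δ' ≤ δ·√(1 - δ²/(4R²)) < δ·exp(-δ²/(8R²))`. -/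
theorem gap_reduction_exp {m : ℕ} (p p' v : EuclideanSpace ℝ (Fin m))
    (hpp' : p ≠ p') (hpv : p ≠ v) (hp'v : p' ≠ v)
    (hle : dist p v ≤ dist p' v)
    (p'' : EuclideanSpace ℝ (Fin m)) (hseg : p'' ∈ segment ℝ p' v)
    (hclosest : ∀ x ∈ segment ℝ p' v, dist p p'' ≤ dist p x)
    (hne : p'' ≠ v)
    (R : ℝ) (hR : dist p v ≤ R)
    (hδr : dist p p' ≤ dist p v) :
    dist p p'' ≤ dist p p' * Real.sqrt (1 - (dist p p') ^ 2 / (4 * R ^ 2)) ∧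
      dist p p' * Real.sqrt (1 - (dist p p') ^ 2 / (4 * R ^ 2)) <
        dist p p' * Real.exp (-(dist p p') ^ 2 / (8 * R ^ 2)) := by
  set δ := dist p p' with hδdef
  set r := dist p v with hrdef
  set s := dist p' v with hsdef
  have hδpos : 0 < δ := dist_pos.2 hpp'
  have hrpos : 0 < r := dist_pos.2 hpv
  have hspos : 0 < s := dist_pos.2 hp'v
  have hRpos : 0 < R := lt_of_lt_of_le hrpos hR
  set a : EuclideanSpace ℝ (Fin m) := p - p' with hadef
  set w : EuclideanSpace ℝ (Fin m) := v - p' with hwdef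
  set c : ℝ := inner ℝ a w with hcdef
  have hna : ‖a‖ = δ := by rw [hadef, hδdef, dist_eq_norm]
  have hnw : ‖w‖ = s := by rw [hwdef, hsdef, dist_eq_norm, norm_sub_rev]
  have hkey : r ^ 2 = δ ^ 2 - 2 * c + s ^ 2 := by
    have h1 : p - v = a - w := by rw [hadef, hwdef]; abel
    have h2 : r ^ 2 = ‖a - w‖ ^ 2 := by rw [hrdef, dist_eq_norm, h1]
    rw [h2, norm_sub_sq_real, hna, hnw, ← hcdef]
  have hcpos : 0 < c := by nlinarith
  have hcs : c ≤ s ^ 2 := by nlinarith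
  -- the candidate point on the segment
  set t : ℝ := c / s ^ 2 with htdef
  have ht0 : 0 ≤ t := le_of_lt (div_pos hcpos (by positivity))
  have ht1 : t ≤ 1 := (div_le_one (by positivity)).2 hcs
  set x : EuclideanSpace ℝ (Fin m) := p' + t • (v - p') with hxdef
  have hxseg : x ∈ segment ℝ p' v := by
    refine ⟨1 - t, t, by linarith, ht0, by ring, ?_⟩
    rw [hxdef]
    module
  have hdx : dist p x ^ 2 = δ ^ 2 - c ^ 2 / s ^ 2 := by
    have h1 : p - x = a - t • w := by rw [hadef, hwdef, hxdef]; abel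
    have h2 : dist p x ^ 2 = ‖a - t • w‖ ^ 2 := by rw [dist_eq_norm, h1]
    rw [h2, norm_sub_sq_real, real_inner_smul_right, norm_smul, ← hcdef, hna, hnw]
    have hs2 : s ^ 2 ≠ 0 := by positivity
    rw [htdef]
    rw [Real.norm_eq_abs, abs_of_nonneg (le_of_lt (div_pos hcpos (by positivity)))]
    field_simp
    ring
  have hle1 : dist p p'' ≤ dist p x := hclosest x hxseg
  -- key quantitative estimate: c/s ≥ δ²/(2R)
  have h2c : 2 * c = δ ^ 2 + s ^ 2 - r ^ 2 := by linarith
  have hfact : 0 ≤ (s - r) * (r * s + r ^ 2 - δ ^ 2) := by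
    have h0 : 0 ≤ s - r := by linarith
    have h1 : 0 ≤ r * s + r ^ 2 - δ ^ 2 := by nlinarith
    exact mul_nonneg h0 h1
  have hcr : δ ^ 2 * s ≤ 2 * c * r := by
    have e : 2 * c * r - δ ^ 2 * s = (s - r) * (r * s + r ^ 2 - δ ^ 2) := by
      linear_combination r * h2c
    linarith
  have hcR : δ ^ 2 * s ≤ 2 * c * R := by
    have := mul_le_mul_of_nonneg_left hR (by linarith : (0:ℝ) ≤ 2 * c)
    linarith
  have hsq : dist p p'' ^ 2 ≤ δ ^ 2 * (1 - δ ^ 2 / (4 * R ^ 2)) := by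
    have h1 : dist p p'' ^ 2 ≤ δ ^ 2 - c ^ 2 / s ^ 2 := by
      rw [← hdx]
      exact pow_le_pow_left₀ dist_nonneg hle1 2
    have h2 : δ ^ 4 / (4 * R ^ 2) ≤ c ^ 2 / s ^ 2 := by
      rw [div_le_div_iff₀ (by positivity) (by positivity)]
      have hsq2 : (δ ^ 2 * s) * (δ ^ 2 * s) ≤ (2 * c * R) * (2 * c * R) :=
        mul_self_le_mul_self (by positivity) hcR
      ring_nf
      ring_nf at hsq2
      linarith
    have : δ ^ 2 * (1 - δ ^ 2 / (4 * R ^ 2)) = δ ^ 2 - δ ^ 4 / (4 * R ^ 2) := by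
      field_simp
    linarith
  have hxpos : 0 < δ ^ 2 / (4 * R ^ 2) := by positivity
  have hx1 : δ ^ 2 / (4 * R ^ 2) ≤ 1 := by
    rw [div_le_one (by positivity)]
    have hδR : δ ≤ R := hδr.trans hR
    nlinarith [mul_le_mul hδR hδR hδpos.le hRpos.le, sq_nonneg R]
  have h1x : (0:ℝ) ≤ 1 - δ ^ 2 / (4 * R ^ 2) := by linarith
  constructor
  · have h3 : dist p p'' = Real.sqrt (dist p p'' ^ 2) := (Real.sqrt_sq dist_nonneg).symm
    rw [h3]
    have h4 : δ * Real.sqrt (1 - δ ^ 2 / (4 * R ^ 2)) =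
        Real.sqrt (δ ^ 2 * (1 - δ ^ 2 / (4 * R ^ 2))) := by
      rw [Real.sqrt_mul (by positivity), Real.sqrt_sq hδpos.le]
    rw [h4]
    exact Real.sqrt_le_sqrt hsq
  · set y : ℝ := δ ^ 2 / (4 * R ^ 2) with hydef
    have hexp : 1 - y < Real.exp (-y) := by
      have := Real.add_one_lt_exp (x := -y) (by linarith [hxpos] : (-y) ≠ 0)
      linarith
    have hsqlt : Real.sqrt (1 - y) < Real.exp (-y / 2) := by
      have h5 : Real.exp (-y / 2) * Real.exp (-y / 2) = Real.exp (-y) := by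
        rw [← Real.exp_add]; congr 1; ring
      have h6 : Real.exp (-y / 2) = Real.sqrt (Real.exp (-y)) := by
        rw [← h5, Real.sqrt_mul_self (Real.exp_nonneg _)]
      rw [h6]
      exact Real.sqrt_lt_sqrt h1x hexp
    have harg : -δ ^ 2 / (8 * R ^ 2) = -y / 2 := by
      rw [hydef]; field_simp; ring
    rw [harg]
    exact mul_lt_mul_of_pos_left hsqlt hδpos
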